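/- Let σ : ℝ → ℝ denote the sign function, let I : ℝ → ℝ be a function, and let y : ℝ → ℝ be differentiable. Then y satisfies y'(t) = (1 − I(t))·(1 − e^{−|y(t)|}) + I(t) for all t if and only if the function x(t) = σ(y(t))·(e^{|y(t)|} − 1) is differentiable and satisfies the symmetrized leaky integrate-and-fire equation x'(t) = |x(t)| + I(t) for all t. -/

import Mathlib

open Real Filter Asymptotics

noncomputable def gfun : ℝ → ℝ := fun v => Real.sign v * (Real.exp |v| - 1)

lemma gfun_hasDerivAt (u : ℝ) : HasDerivAt gfun (Real.exp |u|) u := by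
  rcases lt_trichotomy u 0 with hu | hu | hu
  · have h1 : HasDerivAt (fun v : ℝ => -(Real.exp (-v) - 1)) (Real.exp (-u)) u := by
      have := ((Real.hasDerivAt_exp (-u)).comp u (hasDerivAt_neg u)).sub_const 1
      exact this.neg.congr_deriv (by ring)
    have h2 : gfun =ᶠ[nhds u] (fun v : ℝ => -(Real.exp (-v) - 1)) := by
      filter_upwards [eventually_lt_nhds hu] with v hv
      simp [gfun, Real.sign_of_neg hv, abs_of_neg hv]
    have := h1.congr_of_eventuallyEq h2
    simpa [abs_of_neg hu] using this
  · subst hu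
    rw [hasDerivAt_iff_isLittleO]
    have hexp : (fun t : ℝ => Real.exp t - 1 - t) =o[nhds 0] (fun t => t) := by
      have := (Real.hasDerivAt_exp 0).isLittleO
      simpa using this
    have habs : Tendsto (fun v : ℝ => |v|) (nhds 0) (nhds 0) := by
      simpa using continuous_abs.tendsto (0 : ℝ)
    have h1 : (fun v : ℝ => Real.exp |v| - 1 - |v|) =o[nhds 0] (fun v => |v|) :=
      hexp.comp_tendsto habs
    have h2 : (fun v : ℝ => |v|) =O[nhds 0] (fun v : ℝ => v) := by
      apply isBigO_of_le
      intro v; simp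
    have h3 : (fun v : ℝ => gfun v - v) =O[nhds 0] (fun v : ℝ => Real.exp |v| - 1 - |v|) := by
      apply isBigO_of_le
      intro v
      simp only [norm_eq_abs]
      rcases lt_trichotomy v 0 with hv | hv | hv
      · rw [show gfun v - v = -(Real.exp |v| - 1 - |v|) by
          simp only [gfun, Real.sign_of_neg hv, abs_of_neg hv]; ring]
        rw [abs_neg]
      · simp [hv, gfun]
      · rw [show gfun v - v = Real.exp |v| - 1 - |v| by
          simp only [gfun, Real.sign_of_pos hv, abs_of_pos hv]; ring]
    have key : (fun v : ℝ => gfun v - v) =o[nhds 0] (fun v : ℝ => v) :=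
      (h3.trans_isLittleO h1).trans_isBigO h2
    simpa [gfun] using key
  · have h1 : HasDerivAt (fun v : ℝ => Real.exp v - 1) (Real.exp u) u :=
      (Real.hasDerivAt_exp u).sub_const 1
    have h2 : gfun =ᶠ[nhds u] (fun v : ℝ => Real.exp v - 1) := by
      filter_upwards [eventually_gt_nhds hu] with v hv
      simp [gfun, Real.sign_of_pos hv, abs_of_pos hv]
    have := h1.congr_of_eventuallyEq h2
    simpa [abs_of_pos hu] using this

lemma abs_gfun (u : ℝ) : |gfun u| = Real.exp |u| - 1 := by
  have h : (0:ℝ) ≤ Real.exp |u| - 1 := by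
    have := Real.one_le_exp (abs_nonneg u); linarith
  rcases eq_or_ne u 0 with rfl | hu
  · simp [gfun]
  · simp [gfun, abs_mul, abs_of_nonneg h]
    rcases lt_or_gt_of_ne hu with hv | hv
    · simp [Real.sign_of_neg hv]
    · simp [Real.sign_of_pos hv]

theorem exp_phase_dual_to_symmetrized_LIF
    (I : ℝ → ℝ) (y : ℝ → ℝ) (hy : Differentiable ℝ y) :
    (∀ t, deriv y t = (1 - I t) * (1 - Real.exp (-|y t|)) + I t) ↔
      (Differentiable ℝ (fun t => Real.sign (y t) * (Real.exp |y t| - 1)) ∧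
        ∀ t, deriv (fun s => Real.sign (y s) * (Real.exp |y s| - 1)) t
          = |Real.sign (y t) * (Real.exp |y t| - 1)| + I t) := by
  have hx : ∀ t, HasDerivAt (fun s => Real.sign (y s) * (Real.exp |y s| - 1))
      (Real.exp |y t| * deriv y t) t := by
    intro t
    have := (gfun_hasDerivAt (y t)).comp t (hy t).hasDerivAt
    exact this
  have habs : ∀ t, |Real.sign (y t) * (Real.exp |y t| - 1)| = Real.exp |y t| - 1 :=
    fun t => abs_gfun (y t)
  have hEpos : ∀ t, (0:ℝ) < Real.exp |y t| := fun t => Real.exp_pos _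
  constructor
  · intro h
    refine ⟨fun t => ((hx t).differentiableAt), fun t => ?_⟩
    rw [(hx t).deriv, h t, habs t, Real.exp_neg]
    have hE := (hEpos t).ne'
    field_simp
    ring
  · rintro ⟨_, h⟩
    intro t
    have h1 : Real.exp |y t| * deriv y t = Real.exp |y t| - 1 + I t := by
      rw [← (hx t).deriv, h t, habs t]
    rw [Real.exp_neg]
    have hE := (hEpos t).ne'
    field_simp
    nlinarith [h1]
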